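/- Let TV* be the total variation on [0,1] including boundary terms, so that for u ∈ W^{1,1}([0,1]) ∩ C([0,1]), TV*(u) = ∫₀¹|u′| dx + |u(0)| + |u(1)|. Then every continuously differentiable u with ∫₀¹ u² dx = 1 satisfies TV*(u) ≥ 2, and the constant function u₀ ≡ 1 achieves TV*(u₀) = 2 with ‖u₀‖_{L²} = 1; hence u₀ is a ground state with smallest singular value λ₀ = 2. -/

import Mathlib

/-- For the total variation with boundary terms
`TV*(u) = ∫₀¹ |u'| + |u 0| + |u 1|` (for `C¹` functions on `[0,1]`), every
continuously differentiable `u` with `∫₀¹ u² = 1` satisfies `TV*(u) ≥ 2`,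
and the constant function `u₀ ≡ 1` attains `TV*(u₀) = 2` with unit `L²` norm;
hence `u₀` is a ground state with smallest singular value `λ₀ = 2`. -/
theorem tv_star_ground_state_constant_one :
    (∀ u : ℝ → ℝ, ContDiffOn ℝ 1 u (Set.Icc 0 1) →
      (∫ x in (0:ℝ)..1, (u x) ^ 2) = 1 →
      2 ≤ (∫ x in (0:ℝ)..1, |derivWithin u (Set.Icc 0 1) x|) + |u 0| + |u 1|) ∧
    ((∫ x in (0:ℝ)..1, |derivWithin (fun _ : ℝ => (1:ℝ)) (Set.Icc 0 1) x|)
        + |(1:ℝ)| + |(1:ℝ)| = 2) ∧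
    (∫ x in (0:ℝ)..1, ((1:ℝ)) ^ 2) = 1 := by
  have hud : UniqueDiffOn ℝ (Set.Icc (0:ℝ) 1) := uniqueDiffOn_Icc one_pos
  refine ⟨?_, ?_, ?_⟩
  · intro u hu hw
    set g := derivWithin u (Set.Icc 0 1) with hg
    have hcont : ContinuousOn u (Set.Icc 0 1) := hu.continuousOn
    have hgcont : ContinuousOn g (Set.Icc 0 1) :=
      hu.continuousOn_derivWithin hud le_rfl
    -- max point of u^2
    obtain ⟨c, hc, hmax⟩ := isCompact_Icc.exists_isMaxOn
      (Set.nonempty_Icc.2 zero_le_one) (hcont.pow 2)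
    have hone : 1 ≤ |u c| := by
      have hint : IntervalIntegrable (fun x => u x ^ 2) MeasureTheory.volume 0 1 := by
        apply ContinuousOn.intervalIntegrable
        rw [Set.uIcc_of_le zero_le_one]
        exact hcont.pow 2
      have hle : (∫ x in (0:ℝ)..1, (u x) ^ 2) ≤ ∫ _x in (0:ℝ)..1, (u c) ^ 2 := by
        apply intervalIntegral.integral_mono_on zero_le_one hint intervalIntegrable_const
        intro x hx
        exact hmax hx
      rw [hw, intervalIntegral.integral_const] at hle
      simp at hle
      nlinarith [abs_nonneg (u c), sq_abs (u c)]
    -- FTC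
    have key : ∀ a b : ℝ, a ∈ Set.Icc (0:ℝ) 1 → b ∈ Set.Icc (0:ℝ) 1 → a ≤ b →
        ∫ x in a..b, g x = u b - u a := by
      intro a b ha hb hab
      apply intervalIntegral.integral_eq_sub_of_hasDeriv_right_of_le hab
        (hcont.mono (Set.Icc_subset_Icc ha.1 hb.2))
      · intro x hx
        have hx0 : (0:ℝ) < x := lt_of_le_of_lt ha.1 hx.1
        have hx1 : x < 1 := lt_of_lt_of_le hx.2 hb.2
        have hxm : x ∈ Set.Icc (0:ℝ) 1 := ⟨hx0.le, hx1.le⟩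
        have hnbh : Set.Icc (0:ℝ) 1 ∈ nhds x := Icc_mem_nhds hx0 hx1
        exact ((((hu.differentiableOn one_ne_zero) x hxm).hasDerivWithinAt).hasDerivAt
          hnbh).hasDerivWithinAt
      · apply ContinuousOn.intervalIntegrable
        rw [Set.uIcc_of_le hab]
        exact hgcont.mono (Set.Icc_subset_Icc ha.1 hb.2)
    have h0 : (0:ℝ) ∈ Set.Icc (0:ℝ) 1 := ⟨le_rfl, zero_le_one⟩
    have h1m : (1:ℝ) ∈ Set.Icc (0:ℝ) 1 := ⟨zero_le_one, le_rfl⟩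
    have int1 : IntervalIntegrable (fun x => |g x|) MeasureTheory.volume 0 c := by
      apply ContinuousOn.intervalIntegrable
      rw [Set.uIcc_of_le hc.1]
      exact (hgcont.mono (Set.Icc_subset_Icc le_rfl hc.2)).abs
    have int2 : IntervalIntegrable (fun x => |g x|) MeasureTheory.volume c 1 := by
      apply ContinuousOn.intervalIntegrable
      rw [Set.uIcc_of_le hc.2]
      exact (hgcont.mono (Set.Icc_subset_Icc hc.1 le_rfl)).abs
    have hA : |u c - u 0| ≤ ∫ x in (0:ℝ)..c, |g x| := by
      rw [← key 0 c h0 hc hc.1]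
      exact intervalIntegral.abs_integral_le_integral_abs hc.1
    have hB : |u 1 - u c| ≤ ∫ x in c..1, |g x| := by
      rw [← key c 1 hc h1m hc.2]
      exact intervalIntegral.abs_integral_le_integral_abs hc.2
    have hsplit : (∫ x in (0:ℝ)..c, |g x|) + (∫ x in c..1, |g x|)
        = ∫ x in (0:ℝ)..1, |g x| :=
      intervalIntegral.integral_add_adjacent_intervals int1 int2
    have t1 : |u c| - |u 0| ≤ |u c - u 0| := abs_sub_abs_le_abs_sub _ _
    have t2 : |u c| - |u 1| ≤ |u 1 - u c| := by
      rw [abs_sub_comm]; exact abs_sub_abs_le_abs_sub _ _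
    linarith
  · have hcong : (∫ x in (0:ℝ)..1, |derivWithin (fun _ : ℝ => (1:ℝ)) (Set.Icc 0 1) x|)
        = ∫ _x in (0:ℝ)..1, (0:ℝ) := by
      apply intervalIntegral.integral_congr
      intro x hx
      rw [Set.uIcc_of_le zero_le_one] at hx
      simp [derivWithin_const _ _]
    rw [hcong]
    norm_num
  · simp
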